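/- (Riemann-sum limit from the proof of Lemma 2.7, logarithmic factor.) Let t > 0, ω ∈ ℝ, let b, σ : [0,t] → ℝ be continuous with σ > 0, and let d : [0,t] → ℝ be continuously differentiable. For a positive integer K put Δ = t/K and define S_K = (1/2) ∑_{j=0}^{K−1} [ d((j+1)Δ) − d(jΔ) ] · Log( 1 − 2iω ∑_{k=j}^{K−1} exp( −Δ ∑_{l=k+1}^{K−1} b(lΔ) ) · σ²(kΔ) Δ/4 ). Then lim_{K→∞} S_K = (1/2) ∫_0^t d′(s) Log( 1 − 2iω ∫_s^t exp(−∫_v^t b(u) du) σ²(v)/4 dv ) ds, where Log is the principal complex logarithm (all arguments have real part 1, so Log is well defined). -/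

import Mathlib

open intervalIntegral Filter
set_option maxHeartbeats 4000000

noncomputable def cirSigma (b σ : ℝ → ℝ) (s t : ℝ) : ℝ :=
  (1 / 4) * ∫ v in s..t, Real.exp (-∫ u in v..t, b u) * (σ v) ^ 2

lemma riemann_sum_unif {t : ℝ} (ht : 0 < t) {f : ℝ → ℝ}
    (hf : ContinuousOn f (Set.Icc 0 t)) {ε : ℝ} (hε : 0 < ε) :
    ∃ N : ℕ, 0 < N ∧ ∀ K, N ≤ K → ∀ j ≤ K,
      |(∑ k ∈ Finset.Ico j K, f (k * (t / K)) * (t / K)) - ∫ v in (j * (t / K))..t, f v| ≤ ε * t := by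
  have huc := isCompact_Icc.uniformContinuousOn_of_continuous hf
  rw [Metric.uniformContinuousOn_iff] at huc
  obtain ⟨δ, hδ, hucδ⟩ := huc ε hε
  obtain ⟨N, hN⟩ := exists_nat_gt (t / δ)
  have hN0 : 0 < N := by
    have : (0:ℝ) < t / δ := div_pos ht hδ
    exact_mod_cast Nat.pos_of_ne_zero (by rintro rfl; push_cast at hN; linarith)
  refine ⟨N, hN0, fun K hK j hj => ?_⟩
  have hK0 : 0 < K := lt_of_lt_of_le hN0 hK
  set Δ := t / K with hΔdef
  have hKpos : (0:ℝ) < K := by exact_mod_cast hK0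
  have hΔpos : 0 < Δ := div_pos ht hKpos
  have hKΔ : (K : ℝ) * Δ = t := by rw [hΔdef]; field_simp
  have hΔδ : Δ < δ := by
    have h1 : Δ ≤ t / N := by
      apply div_le_div_of_nonneg_left ht.le (by exact_mod_cast hN0)
      exact_mod_cast hK
    have h2 : t / N < δ := by
      rw [div_lt_iff₀ (by exact_mod_cast hN0)]
      rw [div_lt_iff₀ hδ] at hN
      linarith [hN]
    linarith
  -- membership facts
  have hmem : ∀ k : ℕ, k ≤ K → (k : ℝ) * Δ ∈ Set.Icc (0:ℝ) t := by
    intro k hk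
    constructor
    · positivity
    · rw [← hKΔ]
      apply mul_le_mul_of_nonneg_right _ hΔpos.le
      exact_mod_cast hk
  have hsub : ∀ k : ℕ, k < K → Set.uIcc ((k:ℝ) * Δ) ((k+1:ℕ) * Δ) ⊆ Set.Icc 0 t := by
    intro k hk
    rw [Set.uIcc_of_le (by push_cast; nlinarith)]
    intro x hx
    have h1 := (hmem k hk.le).1
    have h2 := (hmem (k+1) hk).2
    exact ⟨le_trans h1 hx.1, le_trans hx.2 h2⟩
  have hint : ∀ k ∈ Finset.Ico j K, IntervalIntegrable f MeasureTheory.volume ((k:ℝ) * Δ) ((k+1:ℕ) * Δ) := by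
    intro k hk
    exact (hf.mono (hsub k (Finset.mem_Ico.1 hk).2)).intervalIntegrable
  have hsplit : (∫ v in ((j:ℝ) * Δ)..t, f v) = ∑ k ∈ Finset.Ico j K, ∫ v in ((k:ℝ)*Δ)..((k+1:ℕ)*Δ), f v := by
    rw [sum_integral_adjacent_intervals_Ico hj (fun k hk => hint k (Finset.mem_Ico.2 hk))]
    norm_num [hKΔ]
  rw [hsplit, ← Finset.sum_sub_distrib]
  calc |∑ k ∈ Finset.Ico j K, (f ((k:ℝ)*Δ) * Δ - ∫ v in ((k:ℝ)*Δ)..((k+1:ℕ)*Δ), f v)|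
      ≤ ∑ k ∈ Finset.Ico j K, |f ((k:ℝ)*Δ) * Δ - ∫ v in ((k:ℝ)*Δ)..((k+1:ℕ)*Δ), f v| :=
        Finset.abs_sum_le_sum_abs _ _
    _ ≤ ∑ k ∈ Finset.Ico j K, ε * Δ := by
        apply Finset.sum_le_sum
        intro k hk
        have hkK := (Finset.mem_Ico.1 hk).2
        have heq : f ((k:ℝ)*Δ) * Δ - (∫ v in ((k:ℝ)*Δ)..((k+1:ℕ)*Δ), f v)
            = ∫ v in ((k:ℝ)*Δ)..((k+1:ℕ)*Δ), (f ((k:ℝ)*Δ) - f v) := by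
          rw [intervalIntegral.integral_sub intervalIntegrable_const (hint k hk),
            intervalIntegral.integral_const]
          have : ((k+1:ℕ):ℝ) * Δ - (k:ℝ) * Δ = Δ := by push_cast; ring
          rw [this]
          simp [mul_comm, smul_eq_mul]
        rw [heq]
        have hb := intervalIntegral.norm_integral_le_of_norm_le_const (C := ε)
          (f := fun v => f ((k:ℝ)*Δ) - f v) (a := (k:ℝ)*Δ) (b := ((k+1:ℕ):ℝ)*Δ) ?_
        · have : |((k+1:ℕ):ℝ) * Δ - (k:ℝ)*Δ| = Δ := by
            rw [abs_of_nonneg (by push_cast; nlinarith)]; push_cast; ring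
          rw [this] at hb
          exact hb
        · intro x hx
          have hxIcc : x ∈ Set.Icc ((k:ℝ)*Δ) (((k+1:ℕ):ℝ)*Δ) := by
            have := Set.uIoc_of_le (a := (k:ℝ)*Δ) (b := ((k+1:ℕ):ℝ)*Δ) (by push_cast; nlinarith)
            rw [this] at hx
            exact ⟨hx.1.le, hx.2⟩
          have hxmem : x ∈ Set.Icc (0:ℝ) t := hsub k hkK (by
            rw [Set.uIcc_of_le (by push_cast; nlinarith)]; exact hxIcc)
          have hdist : dist ((k:ℝ)*Δ) x < δ := by
            rw [Real.dist_eq, abs_sub_comm, abs_of_nonneg (by linarith [hxIcc.1])]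
            have : x - (k:ℝ)*Δ ≤ Δ := by
              have := hxIcc.2; push_cast at this; linarith
            linarith
          have := hucδ _ (hmem k hkK.le) _ hxmem hdist
          rw [Real.dist_eq] at this
          exact le_of_lt this
    _ = (K - j : ℕ) * (ε * Δ) := by rw [Finset.sum_const, Nat.card_Ico]; simp [nsmul_eq_mul]
    _ ≤ (K:ℝ) * (ε * Δ) := by
        have h1 : ((K - j : ℕ):ℝ) ≤ (K:ℝ) := by exact_mod_cast Nat.sub_le K j
        exact mul_le_mul_of_nonneg_right h1 (by positivity)
    _ = ε * ((K:ℝ) * Δ) := by ring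
    _ = ε * t := by rw [hKΔ]

-- FTC on subintervals
lemma ftc_aux {t : ℝ} {d d' : ℝ → ℝ}
    (hd : ∀ s ∈ Set.Icc 0 t, HasDerivWithinAt d (d' s) (Set.Icc 0 t) s)
    (hd' : ContinuousOn d' (Set.Icc 0 t))
    {a c : ℝ} (ha : 0 ≤ a) (hac : a ≤ c) (hct : c ≤ t) :
    d c - d a = ∫ s in a..c, d' s := by
  have hdc : ContinuousOn d (Set.Icc 0 t) := fun x hx => (hd x hx).continuousWithinAt
  have hsub : Set.Icc a c ⊆ Set.Icc 0 t := Set.Icc_subset_Icc ha hct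
  refine (intervalIntegral.integral_eq_sub_of_hasDeriv_right_of_le hac (hdc.mono hsub)
    (fun x hx => ?_) ?_).symm
  · have hx0t : x ∈ Set.Ioo 0 t := ⟨lt_of_le_of_lt ha hx.1, lt_of_lt_of_le hx.2 hct⟩
    have : HasDerivAt d (d' x) x :=
      (hd x (Set.Ioo_subset_Icc_self hx0t)).hasDerivAt (Icc_mem_nhds hx0t.1 hx0t.2)
    exact this.hasDerivWithinAt
  · exact (hd'.mono (by rw [Set.uIcc_of_le hac]; exact hsub)).intervalIntegrable

theorem cir_log_factor_riemann_limit (t ω : ℝ) (ht : 0 < t) (b σ d d' : ℝ → ℝ)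
    (hb : ContinuousOn b (Set.Icc 0 t)) (hσ : ContinuousOn σ (Set.Icc 0 t))
    (hσpos : ∀ s ∈ Set.Icc 0 t, 0 < σ s)
    (hd : ∀ s ∈ Set.Icc 0 t, HasDerivWithinAt d (d' s) (Set.Icc 0 t) s)
    (hd' : ContinuousOn d' (Set.Icc 0 t)) :
    Tendsto
      (fun K : ℕ =>
        (1 / 2 : ℂ) * ∑ j ∈ Finset.range K,
          ((d ((j + 1) * (t / K)) - d (j * (t / K)) : ℝ) : ℂ) *
            Complex.log (1 - 2 * Complex.I * (ω : ℂ) *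
              ((∑ k ∈ Finset.Ico j K,
                Real.exp (-(t / K) * ∑ l ∈ Finset.Ico (k + 1) K, b (l * (t / K))) *
                  (σ (k * (t / K))) ^ 2 * (t / K) / 4 : ℝ) : ℂ)))
      atTop
      (nhds ((1 / 2 : ℂ) * ∫ s in (0 : ℝ)..t,
        (d' s : ℂ) * Complex.log (1 - 2 * Complex.I * (ω : ℂ) * (cirSigma b σ s t : ℂ)))) := by
  have hIcc : Set.uIcc (0:ℝ) t = Set.Icc 0 t := Set.uIcc_of_le ht.le
  -- the integrand g with Σ(s,t) = ∫_s^t g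
  set g : ℝ → ℝ := fun v => Real.exp (-∫ u in v..t, b u) * (σ v)^2 / 4 with hgdef
  have hInner : ContinuousOn (fun v => ∫ u in v..t, b u) (Set.Icc 0 t) := by
    have := intervalIntegral.continuousOn_primitive_interval_left (a := (0:ℝ)) (b := t)
      (f := b) (μ := MeasureTheory.volume) (by rw [hIcc]; exact hb.integrableOn_Icc)
    rwa [hIcc] at this
  have hg : ContinuousOn g (Set.Icc 0 t) := by
    exact ((Real.continuous_exp.comp_continuousOn hInner.neg).mul (hσ.pow 2)).div_const 4
  have hSigma : ∀ s, cirSigma b σ s t = ∫ v in s..t, g v := by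
    intro s
    rw [cirSigma]
    simp only [hgdef]
    rw [intervalIntegral.integral_div]
    ring
  have hSig_cont : ContinuousOn (fun s => cirSigma b σ s t) (Set.Icc 0 t) := by
    have h2 : ContinuousOn (fun s => ∫ v in s..t, g v) (Set.Icc 0 t) := by
      have := intervalIntegral.continuousOn_primitive_interval_left (a := (0:ℝ)) (b := t)
        (f := g) (μ := MeasureTheory.volume) (by rw [hIcc]; exact hg.integrableOn_Icc)
      rwa [hIcc] at this
    simpa only [hSigma] using h2
  -- constants
  obtain ⟨Mb, hMb⟩ := isCompact_Icc.exists_bound_of_continuousOn hb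
  have hMb0 : 0 ≤ Mb := le_trans (norm_nonneg _) (hMb 0 ⟨le_refl 0, ht.le⟩)
  obtain ⟨Mσ, hMσ⟩ := isCompact_Icc.exists_bound_of_continuousOn (hσ.pow 2)
  have hMσ0 : 0 ≤ Mσ := le_trans (norm_nonneg _) (hMσ 0 ⟨le_refl 0, ht.le⟩)
  obtain ⟨Mg, hMg⟩ := isCompact_Icc.exists_bound_of_continuousOn hg
  have hMg0 : 0 ≤ Mg := le_trans (norm_nonneg _) (hMg 0 ⟨le_refl 0, ht.le⟩)
  obtain ⟨Md, hMd⟩ := isCompact_Icc.exists_bound_of_continuousOn hd'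
  have hMd0 : 0 ≤ Md := le_trans (norm_nonneg _) (hMd 0 ⟨le_refl 0, ht.le⟩)
  set M : ℝ := t * Mb + 1 with hMdef
  have hM0 : 0 < M := by positivity
  set Φ : ℝ → ℂ := fun x => Complex.log (1 - 2 * Complex.I * (ω : ℂ) * (x:ℂ)) with hΦdef
  have hΦcont : Continuous Φ := by
    rw [hΦdef]
    have h1 : Continuous (fun y : ℝ => (1:ℂ) - 2 * Complex.I * (ω : ℂ) * (y:ℂ)) := by
      continuity
    refine h1.clog ?_
    intro x
    rw [Complex.mem_slitPlane_iff]
    left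
    simp
  set R : ℝ := t * (Real.exp M * Mσ / 4) + t * Mg + 1 with hRdef
  have hR0 : 0 < R := by positivity
  have hΦuc := (isCompact_Icc (a := -R) (b := R)).uniformContinuousOn_of_continuous
    hΦcont.continuousOn
  rw [Metric.uniformContinuousOn_iff] at hΦuc
  rw [Metric.tendsto_atTop]
  intro ε hε
  -- choose ε'
  set ε' : ℝ := ε / (t * Md + 1) with hε'def
  have hε'0 : 0 < ε' := by positivity
  obtain ⟨δ', hδ'0, hδ'⟩ := hΦuc ε' hε'0
  set C₁ : ℝ := t * Mσ * Real.exp M / 2 + 1 with hC₁def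
  have hC₁0 : 0 < C₁ := by positivity
  set ε₁ : ℝ := min (1/(2*(t+1))) (δ'/(6*C₁*(t+1))) with hε₁def
  have hε₁0 : 0 < ε₁ := by
    apply lt_min (by positivity) (by positivity)
  set ε₂ : ℝ := δ' / (6*(t+1)) with hε₂def
  have hε₂0 : 0 < ε₂ := by positivity
  obtain ⟨N₁, hN₁0, hN₁⟩ := riemann_sum_unif ht hb hε₁0
  obtain ⟨N₂, hN₂0, hN₂⟩ := riemann_sum_unif ht hg hε₂0
  set η : ℝ := min (1/(2*(Mb+1))) (min (δ'/(6*C₁*(Mb+1))) (δ'/(6*(Mg+1)))) with hηdef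
  have hη0 : 0 < η := by
    apply lt_min (by positivity) (lt_min (by positivity) (by positivity))
  obtain ⟨N₃, hN₃⟩ := exists_nat_gt (t / η)
  clear_value g M Φ R ε' C₁ ε₁ ε₂ η
  -- arithmetic facts about the chosen small constants
  have hε₁a : ε₁ * t ≤ 1/2 := by
    have h1 : ε₁ ≤ 1/(2*(t+1)) := by rw [hε₁def]; exact min_le_left _ _
    have h1' : ε₁ * (2*(t+1)) ≤ 1 := by
      rw [← le_div_iff₀ (by positivity)]; simpa [div_div] using h1
    nlinarith [hε₁0.le]
  have hε₁b : C₁ * (ε₁ * t) ≤ δ'/6 := by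
    have h2 : ε₁ ≤ δ'/(6*C₁*(t+1)) := by rw [hε₁def]; exact min_le_right _ _
    have h2' : ε₁ * (6*C₁*(t+1)) ≤ δ' := by
      rw [← le_div_iff₀ (by positivity)]; simpa [div_div] using h2
    nlinarith [mul_nonneg hε₁0.le hC₁0.le]
  have hε₂a : ε₂ * t ≤ δ'/6 := by
    have h3' : ε₂ * (6*(t+1)) ≤ δ' := by
      rw [← le_div_iff₀ (by positivity), hε₂def]
    nlinarith [hε₂0.le]
  have hε'b : t * Md * ε' ≤ ε := by
    have h4 : ε' * (t*Md+1) = ε := by rw [hε'def]; field_simp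
    nlinarith [hε'0.le]
  refine ⟨max (max N₁ N₂) (N₃ + 1), fun K hK => ?_⟩
  have hKN₁ : N₁ ≤ K := le_trans (le_trans (le_max_left _ _) (le_max_left _ _)) hK
  have hKN₂ : N₂ ≤ K := le_trans (le_trans (le_max_right _ _) (le_max_left _ _)) hK
  have hKN₃ : N₃ + 1 ≤ K := le_trans (le_max_right _ _) hK
  have hK0 : 0 < K := lt_of_lt_of_le hN₁0 hKN₁
  have hKpos : (0:ℝ) < K := by exact_mod_cast hK0
  set Δ : ℝ := t / K with hΔdef
  have hΔpos : 0 < Δ := div_pos ht hKpos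
  have hKΔ : (K : ℝ) * Δ = t := by rw [hΔdef]; field_simp
  have hΔη : Δ < η := by
    have h2 : t / η < K := by
      have : (N₃:ℝ) < K := by exact_mod_cast lt_of_lt_of_le (Nat.lt_succ_self N₃) hKN₃
      linarith
    rw [hΔdef, div_lt_iff₀ hKpos]
    rw [div_lt_iff₀ hη0] at h2
    linarith
  have hΔMb : Δ * Mb ≤ 1/2 ∧ C₁ * (Δ * Mb) ≤ δ'/6 ∧ Δ * Mg ≤ δ'/6 := by
    have h1 : Δ ≤ 1/(2*(Mb+1)) := le_trans hΔη.le (by rw [hηdef]; exact min_le_left _ _)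
    have h2 : Δ ≤ δ'/(6*C₁*(Mb+1)) := le_trans hΔη.le
      (by rw [hηdef]; exact le_trans (min_le_right _ _) (min_le_left _ _))
    have h3 : Δ ≤ δ'/(6*(Mg+1)) := le_trans hΔη.le
      (by rw [hηdef]; exact le_trans (min_le_right _ _) (min_le_right _ _))
    have h1' : Δ * (2*(Mb+1)) ≤ 1 := by
      rw [← le_div_iff₀ (by positivity)]; simpa [div_div] using h1
    have h2' : Δ * (6*C₁*(Mb+1)) ≤ δ' := by
      rw [← le_div_iff₀ (by positivity)]; simpa [div_div] using h2
    have h3' : Δ * (6*(Mg+1)) ≤ δ' := by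
      rw [← le_div_iff₀ (by positivity)]; simpa [div_div] using h3
    refine ⟨by nlinarith [hΔpos.le], by nlinarith [mul_nonneg hΔpos.le hC₁0.le, mul_nonneg (mul_nonneg hΔpos.le hC₁0.le) hMb0], by nlinarith [hΔpos.le]⟩
  -- membership of grid points
  have hmem : ∀ k : ℕ, k ≤ K → (k : ℝ) * Δ ∈ Set.Icc (0:ℝ) t := by
    intro k hk
    constructor
    · exact mul_nonneg (Nat.cast_nonneg k) hΔpos.le
    · rw [← hKΔ]
      exact mul_le_mul_of_nonneg_right (by exact_mod_cast hk) hΔpos.le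
  have hstep : ∀ j : ℕ, (j:ℝ)*Δ ≤ ((j:ℝ)+1)*Δ := fun j => by nlinarith [hΔpos.le]
  have hsub2 : ∀ j : ℕ, j < K → Set.Icc ((j:ℝ)*Δ) (((j:ℝ)+1)*Δ) ⊆ Set.Icc 0 t := by
    intro j hj x hx
    have h1 := (hmem j hj.le).1
    have h2 : ((j:ℝ)+1)*Δ ≤ t := by
      have := (hmem (j+1) hj).2
      push_cast at this
      linarith
    exact ⟨le_trans h1 hx.1, le_trans hx.2 h2⟩
  set A : ℕ → ℝ := fun j => ∑ k ∈ Finset.Ico j K,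
      Real.exp (-Δ * ∑ l ∈ Finset.Ico (k + 1) K, b (↑l * Δ)) * σ (↑k * Δ) ^ 2 * Δ / 4 with hAdef
  -- generic integrability
  have hbinti : ∀ u v : ℝ, u ∈ Set.Icc (0:ℝ) t → v ∈ Set.Icc (0:ℝ) t →
      IntervalIntegrable b MeasureTheory.volume u v :=
    fun u v hu hv => (hb.mono (Set.uIcc_subset_Icc hu hv)).intervalIntegrable
  have hginti : ∀ u v : ℝ, u ∈ Set.Icc (0:ℝ) t → v ∈ Set.Icc (0:ℝ) t →
      IntervalIntegrable g MeasureTheory.volume u v :=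
    fun u v hu hv => (hg.mono (Set.uIcc_subset_Icc hu hv)).intervalIntegrable
  have htmem : t ∈ Set.Icc (0:ℝ) t := Set.right_mem_Icc.2 ht.le
  -- bound on the inner Riemann sums of b
  have hSbound : ∀ k : ℕ, k < K → |Δ * ∑ l ∈ Finset.Ico (k+1) K, b (↑l * Δ)| ≤ t * Mb := by
    intro k hk
    rw [abs_mul, abs_of_pos hΔpos]
    have h1 : |∑ l ∈ Finset.Ico (k+1) K, b (↑l * Δ)| ≤ ∑ l ∈ Finset.Ico (k+1) K, Mb := by
      refine le_trans (Finset.abs_sum_le_sum_abs _ _) (Finset.sum_le_sum ?_)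
      intro l hl
      exact hMb _ (hmem l (Finset.mem_Ico.1 hl).2.le)
    rw [Finset.sum_const, Nat.card_Ico, nsmul_eq_mul] at h1
    calc Δ * |∑ l ∈ Finset.Ico (k+1) K, b (↑l * Δ)| ≤ Δ * (((K - (k+1):ℕ):ℝ) * Mb) :=
          mul_le_mul_of_nonneg_left h1 hΔpos.le
      _ ≤ Δ * ((K:ℝ) * Mb) := by
          have hc : ((K - (k+1):ℕ):ℝ) ≤ (K:ℝ) := by exact_mod_cast Nat.sub_le _ _
          exact mul_le_mul_of_nonneg_left (mul_le_mul_of_nonneg_right hc hMb0) hΔpos.le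
      _ = t * Mb := by rw [← hKΔ]; ring
  -- generic bound for integrals of a bounded function
  have hIb : ∀ (f : ℝ → ℝ) (Mf : ℝ), (∀ x ∈ Set.Icc (0:ℝ) t, ‖f x‖ ≤ Mf) →
      ∀ u v : ℝ, u ∈ Set.Icc (0:ℝ) t → v ∈ Set.Icc (0:ℝ) t → u ≤ v →
      |∫ x in u..v, f x| ≤ Mf * (v - u) := by
    intro f Mf hMf u v hu hv huv
    have h := intervalIntegral.norm_integral_le_of_norm_le_const (C := Mf)
      (f := f) (a := u) (b := v) ?_
    · rw [Real.norm_eq_abs] at h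
      rwa [abs_of_nonneg (by linarith : (0:ℝ) ≤ v - u)] at h
    · intro x hx
      rw [Set.uIoc_of_le huv] at hx
      exact hMf x ⟨le_trans hu.1 hx.1.le, le_trans hx.2 hv.2⟩
  -- Step 1 : comparison of inner exponent sums with integrals
  have hK1 : ∀ k : ℕ, k < K →
      |Δ * ∑ l ∈ Finset.Ico (k+1) K, b (↑l * Δ) - ∫ u in ((k:ℝ) * Δ)..t, b u|
        ≤ ε₁ * t + Δ * Mb := by
    intro k hk
    have hb1 := hN₁ K hKN₁ (k+1) hk
    rw [← hΔdef] at hb1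
    have hsum_comm : ∑ l ∈ Finset.Ico (k+1) K, b (↑l * Δ) * Δ
        = Δ * ∑ l ∈ Finset.Ico (k+1) K, b (↑l * Δ) := by
      rw [← Finset.sum_mul, mul_comm]
    rw [hsum_comm] at hb1
    have hadj : (∫ u in ((k:ℝ) * Δ)..t, b u)
        = (∫ u in ((k:ℝ) * Δ)..((k+1:ℕ) * Δ), b u) + ∫ u in ((k+1:ℕ) * Δ)..t, b u :=
      (intervalIntegral.integral_add_adjacent_intervals
        (hbinti _ _ (hmem k hk.le) (hmem (k+1) hk)) (hbinti _ _ (hmem (k+1) hk) htmem)).symm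
    have hmid : |∫ u in ((k:ℝ) * Δ)..((k+1:ℕ) * Δ), b u| ≤ Mb * Δ := by
      have := hIb b Mb hMb ((k:ℝ)*Δ) ((k+1:ℕ)*Δ) (hmem k hk.le) (hmem (k+1) hk)
        (by push_cast; nlinarith [hΔpos.le])
      calc |∫ u in ((k:ℝ) * Δ)..((k+1:ℕ) * Δ), b u| ≤ Mb * (((k+1:ℕ):ℝ)*Δ - (k:ℝ)*Δ) := this
        _ = Mb * Δ := by push_cast; ring
    have hrw : Δ * (∑ l ∈ Finset.Ico (k+1) K, b (↑l * Δ)) - ∫ u in ((k:ℝ) * Δ)..t, b u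
        = (Δ * (∑ l ∈ Finset.Ico (k+1) K, b (↑l * Δ)) - ∫ u in ((k+1:ℕ) * Δ)..t, b u)
          - ∫ u in ((k:ℝ) * Δ)..((k+1:ℕ) * Δ), b u := by
      rw [hadj]; ring
    rw [hrw]
    have h5 := abs_sub
      (Δ * (∑ l ∈ Finset.Ico (k+1) K, b (↑l * Δ)) - ∫ u in ((k+1:ℕ) * Δ)..t, b u)
      (∫ u in ((k:ℝ) * Δ)..((k+1:ℕ) * Δ), b u)
    have hmid' : |∫ u in ((k:ℝ) * Δ)..((k+1:ℕ) * Δ), b u| ≤ Δ * Mb :=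
      le_trans hmid (le_of_eq (mul_comm _ _))
    exact le_trans h5 (add_le_add hb1 hmid')
  -- elementary exponential estimate
  have hexp : ∀ x y : ℝ, |y| ≤ t * Mb → |x - y| ≤ 1 →
      |Real.exp (-x) - Real.exp (-y)| ≤ Real.exp M * (2 * |x - y|) := by
    intro x y hy hxy
    have hrw : Real.exp (-x) - Real.exp (-y) = Real.exp (-y) * (Real.exp (y - x) - 1) := by
      rw [mul_sub, ← Real.exp_add, mul_one]
      ring_nf
    rw [hrw, abs_mul, Real.abs_exp]
    have h1 : Real.exp (-y) ≤ Real.exp M := by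
      apply Real.exp_le_exp.2
      rw [hMdef]
      linarith [neg_le_abs y]
    have h2 : |Real.exp (y - x) - 1| ≤ 2 * |y - x| :=
      Real.abs_exp_sub_one_le (by rwa [abs_sub_comm])
    calc Real.exp (-y) * |Real.exp (y-x) - 1| ≤ Real.exp M * (2 * |y - x|) :=
        mul_le_mul h1 h2 (abs_nonneg _) (Real.exp_nonneg _)
      _ = Real.exp M * (2 * |x - y|) := by rw [abs_sub_comm]
  -- Step 2 : A j close to the Riemann sum of g
  have hone : ε₁ * t + Δ * Mb ≤ 1 := by linarith [hε₁a, hΔMb.1]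
  have hεΔ0 : 0 ≤ ε₁ * t + Δ * Mb := by
    have := mul_nonneg hε₁0.le ht.le
    have := mul_nonneg hΔpos.le hMb0
    linarith
  have hK2 : ∀ j, j ≤ K → |A j - ∑ k ∈ Finset.Ico j K, g (↑k * Δ) * Δ| ≤ δ'/6 + δ'/6 := by
    intro j hj
    rw [hAdef]
    simp only
    rw [← Finset.sum_sub_distrib]
    have hterm : ∀ k ∈ Finset.Ico j K,
        |Real.exp (-Δ * ∑ l ∈ Finset.Ico (k+1) K, b (↑l*Δ)) * σ (↑k*Δ)^2 * Δ / 4 - g (↑k*Δ) * Δ|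
          ≤ Real.exp M * (2 * (ε₁*t + Δ*Mb)) * (Mσ * Δ / 4) := by
      intro k hk
      have hkK := (Finset.mem_Ico.1 hk).2
      have hg1 : g (↑k*Δ) * Δ = Real.exp (-(∫ u in ((k:ℝ)*Δ)..t, b u)) * σ (↑k*Δ)^2 * Δ / 4 := by
        simp only [hgdef]; ring
      rw [hg1]
      have halg : Real.exp (-Δ * ∑ l ∈ Finset.Ico (k+1) K, b (↑l*Δ)) * σ (↑k*Δ)^2 * Δ / 4
          - Real.exp (-(∫ u in ((k:ℝ)*Δ)..t, b u)) * σ (↑k*Δ)^2 * Δ / 4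
          = (Real.exp (-(Δ * ∑ l ∈ Finset.Ico (k+1) K, b (↑l*Δ)))
              - Real.exp (-(∫ u in ((k:ℝ)*Δ)..t, b u))) * (σ (↑k*Δ)^2 * Δ / 4) := by
        rw [neg_mul]; ring
      rw [halg, abs_mul]
      have hIbd : |∫ u in ((k:ℝ)*Δ)..t, b u| ≤ t * Mb := by
        have := hIb b Mb hMb ((k:ℝ)*Δ) t (hmem k hkK.le) htmem (hmem k hkK.le).2
        calc |∫ u in ((k:ℝ)*Δ)..t, b u| ≤ Mb * (t - (k:ℝ)*Δ) := this
          _ ≤ t * Mb := by nlinarith [(hmem k hkK.le).1, (hmem k hkK.le).2, hMb0]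
      have hSI := hK1 k hkK
      have he := hexp (Δ * ∑ l ∈ Finset.Ico (k+1) K, b (↑l*Δ)) (∫ u in ((k:ℝ)*Δ)..t, b u)
        hIbd (le_trans hSI hone)
      have he2 : |Real.exp (-(Δ * ∑ l ∈ Finset.Ico (k+1) K, b (↑l*Δ)))
          - Real.exp (-(∫ u in ((k:ℝ)*Δ)..t, b u))| ≤ Real.exp M * (2 * (ε₁*t + Δ*Mb)) := by
        refine le_trans he ?_
        have h2 : (2:ℝ) * |Δ * (∑ l ∈ Finset.Ico (k+1) K, b (↑l*Δ)) - ∫ u in ((k:ℝ)*Δ)..t, b u|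
            ≤ 2 * (ε₁*t + Δ*Mb) := by linarith [hSI]
        exact mul_le_mul_of_nonneg_left h2 (Real.exp_nonneg _)
      have hσbd : |σ (↑k*Δ)^2 * Δ / 4| ≤ Mσ * Δ / 4 := by
        rw [abs_div, abs_mul, abs_of_pos hΔpos]
        have := hMσ _ (hmem k hkK.le)
        rw [Real.norm_eq_abs] at this
        have h4 : |(4:ℝ)| = 4 := by norm_num
        rw [h4]
        have : |σ (↑k*Δ)^2| * Δ ≤ Mσ * Δ := mul_le_mul_of_nonneg_right this hΔpos.le
        linarith
      exact mul_le_mul he2 hσbd (abs_nonneg _) (by positivity)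
    refine le_trans (Finset.abs_sum_le_sum_abs _ _) ?_
    refine le_trans (Finset.sum_le_sum hterm) ?_
    rw [Finset.sum_const, Nat.card_Ico, nsmul_eq_mul]
    have hc : ((K - j : ℕ):ℝ) ≤ (K:ℝ) := by exact_mod_cast Nat.sub_le _ _
    calc ((K - j : ℕ):ℝ) * (Real.exp M * (2 * (ε₁*t + Δ*Mb)) * (Mσ * Δ / 4))
        ≤ (K:ℝ) * (Real.exp M * (2 * (ε₁*t + Δ*Mb)) * (Mσ * Δ / 4)) :=
          mul_le_mul_of_nonneg_right hc (by positivity)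
      _ = (t * Mσ * Real.exp M / 2) * (ε₁*t + Δ*Mb) := by rw [← hKΔ]; ring
      _ ≤ C₁ * (ε₁*t + Δ*Mb) := by
          apply mul_le_mul_of_nonneg_right _ hεΔ0
          rw [hC₁def]
          linarith
      _ = C₁ * (ε₁*t) + C₁ * (Δ*Mb) := by ring
      _ ≤ δ'/6 + δ'/6 := add_le_add hε₁b hΔMb.2.1
  -- bound |A j| ≤ R
  have hAb : ∀ j, j ≤ K → |A j| ≤ R := by
    intro j hj
    rw [hAdef]
    simp only
    refine le_trans (Finset.abs_sum_le_sum_abs _ _) ?_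
    have hterm2 : ∀ k ∈ Finset.Ico j K,
        |Real.exp (-Δ * ∑ l ∈ Finset.Ico (k+1) K, b (↑l*Δ)) * σ (↑k*Δ)^2 * Δ / 4|
          ≤ Real.exp M * Mσ * Δ / 4 := by
          intro k hk
          have hkK := (Finset.mem_Ico.1 hk).2
          have hebd : Real.exp (-Δ * ∑ l ∈ Finset.Ico (k+1) K, b (↑l*Δ)) ≤ Real.exp M := by
            apply Real.exp_le_exp.2
            have h1 := hSbound k hkK
            rw [hMdef]
            have := neg_le_abs (Δ * ∑ l ∈ Finset.Ico (k+1) K, b (↑l*Δ))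
            rw [neg_mul]
            linarith
          have hσbd := hMσ _ (hmem k hkK.le)
          rw [Real.norm_eq_abs, abs_of_nonneg (sq_nonneg _)] at hσbd
          rw [abs_div, abs_mul, abs_mul, abs_of_pos hΔpos, Real.abs_exp]
          have h4 : |(4:ℝ)| = 4 := by norm_num
          rw [h4]
          have h5 : |σ (↑k*Δ)^2| = σ (↑k*Δ)^2 := abs_of_nonneg (sq_nonneg _)
          rw [h5]
          have hle : Real.exp (-Δ * ∑ l ∈ Finset.Ico (k+1) K, b (↑l*Δ)) * σ (↑k*Δ)^2 * Δ
              ≤ Real.exp M * Mσ * Δ := by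
            apply mul_le_mul_of_nonneg_right _ hΔpos.le
            exact mul_le_mul hebd hσbd (sq_nonneg _) (Real.exp_nonneg _)
          linarith
    refine le_trans (Finset.sum_le_sum hterm2) ?_
    rw [Finset.sum_const, Nat.card_Ico, nsmul_eq_mul]
    have hc : ((K - j : ℕ):ℝ) ≤ (K:ℝ) := by exact_mod_cast Nat.sub_le _ _
    calc ((K - j : ℕ):ℝ) * (Real.exp M * Mσ * Δ / 4)
        ≤ (K:ℝ) * (Real.exp M * Mσ * Δ / 4) :=
          mul_le_mul_of_nonneg_right hc (by positivity)
      _ = t * (Real.exp M * Mσ / 4) := by rw [← hKΔ]; ring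
      _ ≤ R := by
          rw [hRdef]
          nlinarith [mul_nonneg ht.le hMg0]
  -- bound for the integrals of g
  have hGb : ∀ s, s ∈ Set.Icc (0:ℝ) t → |∫ v in s..t, g v| ≤ R := by
    intro s hs
    have := hIb g Mg hMg s t hs htmem hs.2
    rw [hRdef]
    have hpos : (0:ℝ) ≤ t * (Real.exp M * Mσ / 4) := by positivity
    nlinarith [hs.1, hs.2, hMg0]
  -- the key uniform estimate
  have key : ∀ j, j < K → ∀ s ∈ Set.Icc ((j:ℝ)*Δ) (((j:ℝ)+1)*Δ),
      ‖Φ (A j) - Φ (cirSigma b σ s t)‖ ≤ ε' := by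
    intro j hj s hs
    have hsIcc : s ∈ Set.Icc (0:ℝ) t := hsub2 j hj hs
    have p1 : |A j - ∑ k ∈ Finset.Ico j K, g (↑k * Δ) * Δ| ≤ δ'/6 + δ'/6 := hK2 j hj.le
    have p2 : |(∑ k ∈ Finset.Ico j K, g (↑k * Δ) * Δ) - ∫ v in ((j:ℝ) * Δ)..t, g v| ≤ δ'/6 := by
      have h := hN₂ K hKN₂ j hj.le
      rw [← hΔdef] at h
      exact le_trans h hε₂a
    have p3 : |(∫ v in ((j:ℝ)*Δ)..t, g v) - ∫ v in s..t, g v| ≤ δ'/6 := by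
      have hadj : (∫ v in ((j:ℝ)*Δ)..t, g v)
          = (∫ v in ((j:ℝ)*Δ)..s, g v) + ∫ v in s..t, g v :=
        (intervalIntegral.integral_add_adjacent_intervals
          (hginti _ _ (hmem j hj.le) hsIcc) (hginti _ _ hsIcc htmem)).symm
      rw [hadj, add_sub_cancel_right]
      have := hIb g Mg hMg ((j:ℝ)*Δ) s (hmem j hj.le) hsIcc hs.1
      have hsd : s - (j:ℝ)*Δ ≤ Δ := by
        have := hs.2
        nlinarith [hs.1]
      calc |∫ v in ((j:ℝ)*Δ)..s, g v| ≤ Mg * (s - (j:ℝ)*Δ) := this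
        _ ≤ Mg * Δ := mul_le_mul_of_nonneg_left hsd hMg0
        _ = Δ * Mg := mul_comm _ _
        _ ≤ δ'/6 := hΔMb.2.2
    have hdist : dist (A j) (∫ v in s..t, g v) < δ' := by
      rw [Real.dist_eq]
      calc |A j - ∫ v in s..t, g v|
          ≤ |A j - ∑ k ∈ Finset.Ico j K, g (↑k * Δ) * Δ|
            + |(∑ k ∈ Finset.Ico j K, g (↑k * Δ) * Δ) - ∫ v in s..t, g v| := abs_sub_le _ _ _
        _ ≤ |A j - ∑ k ∈ Finset.Ico j K, g (↑k * Δ) * Δ|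
            + (|(∑ k ∈ Finset.Ico j K, g (↑k * Δ) * Δ) - ∫ v in ((j:ℝ) * Δ)..t, g v|
              + |(∫ v in ((j:ℝ)*Δ)..t, g v) - ∫ v in s..t, g v|) := by
            have := abs_sub_le (∑ k ∈ Finset.Ico j K, g (↑k * Δ) * Δ)
              (∫ v in ((j:ℝ) * Δ)..t, g v) (∫ v in s..t, g v)
            linarith
        _ ≤ (δ'/6 + δ'/6) + (δ'/6 + δ'/6) := by linarith
        _ < δ' := by linarith
    have hmem1 : A j ∈ Set.Icc (-R) R := by
      rw [Set.mem_Icc]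
      exact abs_le.1 (hAb j hj.le)
    have hmem2 : (∫ v in s..t, g v) ∈ Set.Icc (-R) R := by
      rw [Set.mem_Icc]
      exact abs_le.1 (hGb s hsIcc)
    have h := hδ' _ hmem1 _ hmem2 hdist
    rw [dist_eq_norm] at h
    rw [hSigma s]
    exact h.le
  -- assembling everything
  have hcont : ContinuousOn (fun s => (d' s:ℂ) * Φ (cirSigma b σ s t)) (Set.Icc 0 t) :=
    (Complex.continuous_ofReal.comp_continuousOn hd').mul (hΦcont.comp_continuousOn hSig_cont)
  have hTsplit : (∫ s in (0:ℝ)..t, (d' s:ℂ) * Φ (cirSigma b σ s t))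
      = ∑ j ∈ Finset.range K, ∫ s in ((j:ℝ)*Δ)..(((j:ℝ)+1)*Δ), (d' s:ℂ) * Φ (cirSigma b σ s t) := by
    rw [Finset.range_eq_Ico]
    have h := intervalIntegral.sum_integral_adjacent_intervals_Ico (a := fun j : ℕ => (j:ℝ)*Δ)
      (m := 0) (n := K) (μ := MeasureTheory.volume)
      (f := fun s => (d' s:ℂ) * Φ (cirSigma b σ s t)) (Nat.zero_le K)
      (fun k hk => (hcont.mono
        (Set.uIcc_subset_Icc (hmem k hk.2.le) (hmem (k+1) hk.2))).intervalIntegrable)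
    simp only [Nat.cast_zero, zero_mul, Nat.cast_succ, hKΔ] at h
    rw [← h]
  have hSKj : ∀ j : ℕ, j < K →
      ((d (((j:ℝ)+1)*Δ) - d ((j:ℝ)*Δ) : ℝ):ℂ) * Φ (A j)
        = ∫ s in ((j:ℝ)*Δ)..(((j:ℝ)+1)*Δ), (d' s:ℂ) * Φ (A j) := by
    intro j hj
    have h2 : ((j:ℝ)+1)*Δ ≤ t := by
      have := (hmem (j+1) hj).2
      push_cast at this
      linarith
    have hft := ftc_aux hd hd' (hmem j hj.le).1 (hstep j) h2
    rw [hft, ← intervalIntegral.integral_ofReal, ← intervalIntegral.integral_mul_const]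
  have hmain : dist ((1/2:ℂ) * ∑ j ∈ Finset.range K,
        ((d (((j:ℝ)+1)*Δ) - d ((j:ℝ)*Δ) : ℝ):ℂ) * Φ (A j))
      ((1/2:ℂ) * ∫ s in (0:ℝ)..t, (d' s:ℂ) * Φ (cirSigma b σ s t)) < ε := by
    have hs1 : ∑ j ∈ Finset.range K, ((d (((j:ℝ)+1)*Δ) - d ((j:ℝ)*Δ) : ℝ):ℂ) * Φ (A j)
        = ∑ j ∈ Finset.range K, ∫ s in ((j:ℝ)*Δ)..(((j:ℝ)+1)*Δ), (d' s:ℂ) * Φ (A j) :=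
      Finset.sum_congr rfl fun j hj => hSKj j (Finset.mem_range.1 hj)
    rw [dist_eq_norm, hs1, hTsplit, ← mul_sub, ← Finset.sum_sub_distrib]
    rw [norm_mul]
    have hnhalf : ‖(1/2:ℂ)‖ = 1/2 := by norm_num
    rw [hnhalf]
    have hbound : ∀ j ∈ Finset.range K,
        ‖(∫ s in ((j:ℝ)*Δ)..(((j:ℝ)+1)*Δ), (d' s:ℂ) * Φ (A j))
          - ∫ s in ((j:ℝ)*Δ)..(((j:ℝ)+1)*Δ), (d' s:ℂ) * Φ (cirSigma b σ s t)‖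
          ≤ Md * ε' * Δ := by
      intro j hjr
      have hj := Finset.mem_range.1 hjr
      have huIcc : Set.uIcc ((j:ℝ)*Δ) (((j:ℝ)+1)*Δ) ⊆ Set.Icc (0:ℝ) t := by
        rw [Set.uIcc_of_le (hstep j)]
        exact hsub2 j hj
      have hint1 : IntervalIntegrable (fun s => (d' s:ℂ) * Φ (A j)) MeasureTheory.volume
          ((j:ℝ)*Δ) (((j:ℝ)+1)*Δ) :=
        (((Complex.continuous_ofReal.comp_continuousOn hd').mul continuousOn_const).mono
          huIcc).intervalIntegrable
      have hint2 : IntervalIntegrable (fun s => (d' s:ℂ) * Φ (cirSigma b σ s t))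
          MeasureTheory.volume ((j:ℝ)*Δ) (((j:ℝ)+1)*Δ) :=
        (hcont.mono huIcc).intervalIntegrable
      have hdiff : (∫ s in ((j:ℝ)*Δ)..(((j:ℝ)+1)*Δ), (d' s:ℂ) * Φ (A j))
            - ∫ s in ((j:ℝ)*Δ)..(((j:ℝ)+1)*Δ), (d' s:ℂ) * Φ (cirSigma b σ s t)
          = ∫ s in ((j:ℝ)*Δ)..(((j:ℝ)+1)*Δ),
              (d' s:ℂ) * (Φ (A j) - Φ (cirSigma b σ s t)) := by
        rw [← intervalIntegral.integral_sub hint1 hint2]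
        refine intervalIntegral.integral_congr fun s hs => ?_
        ring
      rw [hdiff]
      have h := intervalIntegral.norm_integral_le_of_norm_le_const (C := Md * ε')
        (f := fun s => (d' s:ℂ) * (Φ (A j) - Φ (cirSigma b σ s t)))
        (a := (j:ℝ)*Δ) (b := ((j:ℝ)+1)*Δ) ?_
      · have habs : |((j:ℝ)+1)*Δ - (j:ℝ)*Δ| = Δ := by
          rw [abs_of_nonneg (by nlinarith [hΔpos.le])]; ring
        rw [habs] at h
        exact h
      · intro s hs
        rw [Set.uIoc_of_le (hstep j)] at hs
        have hsmem : s ∈ Set.Icc ((j:ℝ)*Δ) (((j:ℝ)+1)*Δ) := ⟨hs.1.le, hs.2⟩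
        rw [norm_mul, Complex.norm_real]
        exact mul_le_mul (hMd s (hsub2 j hj hsmem)) (key j hj s hsmem) (norm_nonneg _) hMd0
    have hb1 : ‖∑ j ∈ Finset.range K,
          ((∫ s in ((j:ℝ)*Δ)..(((j:ℝ)+1)*Δ), (d' s:ℂ) * Φ (A j))
            - ∫ s in ((j:ℝ)*Δ)..(((j:ℝ)+1)*Δ), (d' s:ℂ) * Φ (cirSigma b σ s t))‖
          ≤ ∑ j ∈ Finset.range K, (Md * ε' * Δ) :=
      le_trans (norm_sum_le _ _) (Finset.sum_le_sum hbound)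
    rw [Finset.sum_const, Finset.card_range, nsmul_eq_mul] at hb1
    have hb2 : (1/2 : ℝ) * ‖∑ j ∈ Finset.range K,
          ((∫ s in ((j:ℝ)*Δ)..(((j:ℝ)+1)*Δ), (d' s:ℂ) * Φ (A j))
            - ∫ s in ((j:ℝ)*Δ)..(((j:ℝ)+1)*Δ), (d' s:ℂ) * Φ (cirSigma b σ s t))‖
          ≤ (1/2 : ℝ) * ((K:ℝ) * (Md * ε' * Δ)) :=
      mul_le_mul_of_nonneg_left hb1 (by norm_num)
    have hb3 : (1/2 : ℝ) * ((K:ℝ) * (Md * ε' * Δ)) = (1/2 : ℝ) * (t * Md * ε') := by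
      rw [← hKΔ]; ring
    have h0 : 0 ≤ t * Md * ε' := mul_nonneg (mul_nonneg ht.le hMd0) hε'0.le
    linarith [hb2, hb3, hε'b]
  simpa only [hΦdef, hAdef] using hmain
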